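/- For any d ≥ 2 and any matrix A ∈ M_d(ℂ), if V·A = A·Vᵀ for all V ∈ SU(d), then A = 0. -/
import Mathlib


open Matrix

/-- The set of special unitary `d × d` complex matrices. -/
def SU (d : ℕ) : Set (Matrix (Fin d) (Fin d) ℂ) :=
  {V | V ∈ Matrix.unitaryGroup (Fin d) ℂ ∧ V.det = 1}

/-- For `d ≥ 2`, if `V * A = A * Vᵀ` for all `V ∈ SU(d)`, then `A = 0`. -/
theorem transpose_intertwiner_eq_zero (d : ℕ) (hd : 2 ≤ d)
    (A : Matrix (Fin d) (Fin d) ℂ) (h : ∀ V ∈ SU d, V * A = A * Vᵀ) :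
    A = 0 := by
  haveI : Nontrivial (Fin d) := Fin.nontrivial_iff_two_le.mpr hd
  -- Master lemma: for any unimodular `u` and permutation `σ` with
  -- `(∏ u) * sign σ = 1`, the hypothesis with `V = diagonal u * P_σ` gives
  -- the entrywise relation below.
  have master : ∀ (u : Fin d → ℂ) (σ : Equiv.Perm (Fin d)),
      (∀ k, u k * star (u k) = 1) →
      (Matrix.diagonal u * σ.toPEquiv.toMatrix).det = 1 →
      ∀ p q, u p * A (σ p) q = A p (σ q) * u q := by
    intro u σ hu hdet p q
    set P : Matrix (Fin d) (Fin d) ℂ := σ.toPEquiv.toMatrix with hPdef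
    have hPT : Pᵀ = σ.symm.toPEquiv.toMatrix := by
      rw [Equiv.toPEquiv_symm, PEquiv.toMatrix_symm]
    have hPstar : star P = σ.symm.toPEquiv.toMatrix := by
      rw [← hPT]
      ext i j
      simp only [Matrix.star_apply, Matrix.transpose_apply, hPdef,
        PEquiv.toMatrix_apply]
      rw [apply_ite (star : ℂ → ℂ)]
      simp
    have hPP : P * σ.symm.toPEquiv.toMatrix = (1 : Matrix (Fin d) (Fin d) ℂ) := by
      rw [hPdef, ← PEquiv.toMatrix_trans, ← Equiv.toPEquiv_trans,
        Equiv.self_trans_symm, Equiv.toPEquiv_refl, PEquiv.toMatrix_refl]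
    have hdiag : Matrix.diagonal u * Matrix.diagonal (star u)
        = (1 : Matrix (Fin d) (Fin d) ℂ) := by
      rw [Matrix.diagonal_mul_diagonal]
      have h1 : (fun i => u i * star u i) = (1 : Fin d → ℂ) := funext fun k => hu k
      rw [h1]
      exact Matrix.diagonal_one
    have hmem : Matrix.diagonal u * P ∈ Matrix.unitaryGroup (Fin d) ℂ := by
      rw [Matrix.mem_unitaryGroup_iff]
      have hstar : star (Matrix.diagonal u * P)
          = σ.symm.toPEquiv.toMatrix * Matrix.diagonal (star u) := by
        rw [StarMul.star_mul, hPstar, Matrix.star_eq_conjTranspose,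
          Matrix.diagonal_conjTranspose]
      rw [hstar, mul_assoc, ← mul_assoc P, hPP, one_mul, hdiag]
    have hSU : Matrix.diagonal u * P ∈ SU d := ⟨hmem, hdet⟩
    have hVA : Matrix.diagonal u * P * A
        = Matrix.diagonal u * A.submatrix σ id := by
      rw [mul_assoc, hPdef, PEquiv.toMatrix_toPEquiv_mul]
    have hAVT : A * (Matrix.diagonal u * P)ᵀ
        = A.submatrix id σ * Matrix.diagonal u := by
      rw [Matrix.transpose_mul, Matrix.diagonal_transpose, hPT, ← mul_assoc,
        PEquiv.mul_toMatrix_toPEquiv, Equiv.symm_symm]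
    have := congrFun (congrFun (h _ hSU) p) q
    rw [hVA, hAVT] at this
    simpa [Matrix.diagonal_mul, Matrix.mul_diagonal] using this
  -- off-diagonal entries vanish
  have hoff : ∀ i j : Fin d, i ≠ j → A i j = 0 := by
    intro i j hij
    have key := master (fun k => if k = i then Complex.I else if k = j then
        -Complex.I else 1) 1
      (by
        intro k
        by_cases h1 : k = i <;> by_cases h2 : k = j <;>
          simp [h1, h2, hij, hij.symm, Complex.mul_conj', Complex.I_mul_I])
      (by
        rw [Matrix.det_mul, Matrix.det_diagonal]
        have h1 : ((1 : Equiv.Perm (Fin d)).toPEquiv.toMatrix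
            : Matrix (Fin d) (Fin d) ℂ).det = 1 := by
          rw [show ((1 : Equiv.Perm (Fin d)) : Fin d ≃ Fin d) = Equiv.refl (Fin d) from rfl,
            Equiv.toPEquiv_refl, PEquiv.toMatrix_refl, Matrix.det_one]
        rw [h1, mul_one]
        rw [show (Finset.univ : Finset (Fin d)) = insert i (insert j
          (Finset.univ.erase i |>.erase j)) from ?_]
        · rw [Finset.prod_insert, Finset.prod_insert]
          · have : ∀ k ∈ (Finset.univ.erase i |>.erase j),
                (if k = i then Complex.I else if k = j then -Complex.I else 1) = 1 := by
              intro k hk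
              simp only [Finset.mem_erase] at hk
              simp [hk.1, hk.2.1]
            rw [Finset.prod_congr rfl this]
            simp [hij.symm, Complex.I_mul_I]
          · simp
          · simp [hij, Finset.mem_insert]
        · ext k
          simp only [Finset.mem_insert, Finset.mem_erase, Finset.mem_univ, and_true,
            iff_true]
          tauto)
      i j
    simp [hij, hij.symm] at key
    -- key : I * A i j = A i j * (-I)
    have h2 : A i j * (2 * Complex.I) = 0 := by linear_combination key
    rcases mul_eq_zero.mp h2 with h3 | h3
    · exact h3
    · exfalso
      have : (Complex.I : ℂ) ≠ 0 := Complex.I_ne_zero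
      simp at h3
  -- diagonal entries vanish
  have hdiag0 : ∀ i : Fin d, A i i = 0 := by
    intro i
    obtain ⟨j, hj⟩ := exists_ne i
    have hij : i ≠ j := hj.symm
    have hswapdet : ((Equiv.swap i j).toPEquiv.toMatrix
        : Matrix (Fin d) (Fin d) ℂ).det = -1 := by
      have := Matrix.det_permutation (R := ℂ) (σ := Equiv.swap i j)
      rw [show ((Equiv.swap i j).permMatrix ℂ) = (Equiv.swap i j).toPEquiv.toMatrix
        from rfl] at this
      rw [this, Equiv.Perm.sign_swap hij]
      simp
    have prodlem : ∀ (a b : ℂ), (∏ k, (if k = i then a else if k = j then b else 1)) = a * b := by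
      intro a b
      rw [show (Finset.univ : Finset (Fin d)) = insert i (insert j
        (Finset.univ.erase i |>.erase j)) from ?_]
      · rw [Finset.prod_insert, Finset.prod_insert]
        · have : ∀ k ∈ (Finset.univ.erase i |>.erase j),
              (if k = i then a else if k = j then b else 1) = 1 := by
            intro k hk
            simp only [Finset.mem_erase] at hk
            simp [hk.1, hk.2.1]
          rw [Finset.prod_congr rfl this]
          simp [hij.symm]
        · simp
        · simp [hij, Finset.mem_insert]
      · ext k
        simp only [Finset.mem_insert, Finset.mem_erase, Finset.mem_univ, and_true,
          iff_true]
        tauto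
    -- first relation : A j j = - A i i
    have key1 := master (fun k => if k = i then 1 else if k = j then -1 else 1)
      (Equiv.swap i j)
      (by
        intro k
        by_cases h1 : k = i <;> by_cases h2 : k = j <;> simp [h1, h2, hij, hij.symm])
      (by
        rw [Matrix.det_mul, Matrix.det_diagonal, hswapdet, prodlem]
        ring)
      i j
    simp [hij, hij.symm] at key1
    -- key1 : 1 * A j j = A i i * (-1)  (after ifs)
    -- second relation : A j j = A i i
    have key2 := master (fun k => if k = i then Complex.I else if k = j then
        Complex.I else 1) (Equiv.swap i j)
      (by
        intro k
        by_cases h1 : k = i <;> by_cases h2 : k = j <;>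
          simp [h1, h2, hij, hij.symm, Complex.mul_conj', Complex.I_mul_I])
      (by
        rw [Matrix.det_mul, Matrix.det_diagonal, hswapdet, prodlem,
          Complex.I_mul_I]
        ring)
      i j
    simp [hij, hij.symm] at key2
    -- key2 : I * A j j = A i i * I
    have hjj : A j j = -A i i := by
      simpa using key1
    have hji : A j j = A i i := by
      have h2 : (A j j - A i i) * Complex.I = 0 := by linear_combination key2
      rcases mul_eq_zero.mp h2 with h3 | h3
      · exact sub_eq_zero.mp h3
      · exact absurd h3 Complex.I_ne_zero
    have heq : A i i = -A i i := hji.symm.trans hjj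
    linear_combination (1/2 : ℂ) * heq
  ext i j
  rcases eq_or_ne i j with rfl | hij
  · simpa using hdiag0 i
  · simpa using hoff i j hij
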